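/- The epigraph of the perspective of the exponential function equals the exponential cone: epi f̃ = {(x,η,δ) ∈ ℝ × (0,+∞) × ℝ : η e^{x/η} ≤ δ} ∪ ((-∞,0] × {0} × [0,+∞)), and this set is a closed convex cone in ℝ³. -/

import Mathlib

open scoped Classical
open Filter Set Topology

noncomputable section

/-- `f` is proper, convex and lower semicontinuous (the class `Γ₀`). -/
def Gamma0 {E : Type*} [NormedAddCommGroup E] [NormedSpace ℝ E] (f : E → EReal) : Prop :=
  (∃ x, f x ≠ ⊤) ∧ (∀ x, f x ≠ ⊥) ∧
  (∀ x y : E, ∀ a b : ℝ, 0 ≤ a → 0 ≤ b → a + b = 1 →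
    f (a • x + b • y) ≤ (a : EReal) * f x + (b : EReal) * f y) ∧
  LowerSemicontinuous f

/-- recession function of `f` with base point `x0 ∈ dom f`:
`(rec f)(x) = lim_{t→∞} (f(x0+tx)-f(x0))/t`, which by convexity equals the supremum. -/
def recFn {E : Type*} [NormedAddCommGroup E] [NormedSpace ℝ E]
    (f : E → EReal) (x0 : E) (x : E) : EReal :=
  ⨆ t ∈ Set.Ioi (0 : ℝ), (f (x0 + t • x) - f x0) * ((t⁻¹ : ℝ) : EReal)

/-- the perspective function of `f` (recession with base point `x0 ∈ dom f`). -/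
def persp {E : Type*} [NormedAddCommGroup E] [NormedSpace ℝ E]
    (f : E → EReal) (x0 : E) (p : E × ℝ) : EReal :=
  if 0 < p.2 then (p.2 : EReal) * f (p.2⁻¹ • p.1)
  else if p.2 = 0 then recFn f x0 p.1 else ⊤

/-- Fenchel conjugate. -/
def conj {E : Type*} [NormedAddCommGroup E] [InnerProductSpace ℝ E]
    (f : E → EReal) (u : E) : EReal :=
  ⨆ x, ((inner ℝ x u : ℝ) : EReal) - f x

/-- Fenchel conjugate on `ℝ`. -/
def conjR (f : ℝ → EReal) (u : ℝ) : EReal := ⨆ x : ℝ, ((x * u : ℝ) : EReal) - f x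

/-- Fenchel conjugate on `E × ℝ` (with the Hilbert direct sum inner product). -/
def conj2 {E : Type*} [NormedAddCommGroup E] [InnerProductSpace ℝ E]
    (g : E × ℝ → EReal) (q : E × ℝ) : EReal :=
  ⨆ p : E × ℝ, (((inner ℝ p.1 q.1 : ℝ) + p.2 * q.2 : ℝ) : EReal) - g p

/-- indicator function of a set. -/
def indE {E : Type*} (C : Set E) (x : E) : EReal := if x ∈ C then 0 else ⊤

/-- support function of a set. -/
def suppFn {E : Type*} [NormedAddCommGroup E] [InnerProductSpace ℝ E]
    (C : Set E) (x : E) : EReal := ⨆ u ∈ C, ((inner ℝ u x : ℝ) : EReal)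

/-- epigraph of an extended-real-valued function. -/
def epi {E : Type*} (f : E → EReal) : Set (E × ℝ) := {p | f p.1 ≤ (p.2 : EReal)}

/-- epigraph of the perspective of `f`, as a subset of `E × ℝ × ℝ`. -/
def epiPersp {E : Type*} [NormedAddCommGroup E] [NormedSpace ℝ E]
    (f : E → EReal) (x0 : E) : Set (E × ℝ × ℝ) :=
  {p | persp f x0 (p.1, p.2.1) ≤ (p.2.2 : EReal)}

/-- `p` is the metric projection of `z` onto `C ⊆ E`. -/
def IsProjE {E : Type*} [NormedAddCommGroup E] (C : Set E) (z p : E) : Prop :=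
  p ∈ C ∧ ∀ q ∈ C, ‖z - p‖ ≤ ‖z - q‖

/-- `p` is the metric projection of `z` onto `C ⊆ E ⊕ ℝ` (Hilbert direct sum distance). -/
def IsProj2 {E : Type*} [NormedAddCommGroup E] (C : Set (E × ℝ)) (z p : E × ℝ) : Prop :=
  p ∈ C ∧ ∀ q ∈ C,
    ‖z.1 - p.1‖ ^ 2 + (z.2 - p.2) ^ 2 ≤ ‖z.1 - q.1‖ ^ 2 + (z.2 - q.2) ^ 2

/-- `p` is the metric projection of `z` onto `C ⊆ E ⊕ ℝ ⊕ ℝ` (Hilbert direct sum distance). -/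
def IsProj3 {E : Type*} [NormedAddCommGroup E] (C : Set (E × ℝ × ℝ)) (z p : E × ℝ × ℝ) : Prop :=
  p ∈ C ∧ ∀ q ∈ C,
    ‖z.1 - p.1‖ ^ 2 + (z.2.1 - p.2.1) ^ 2 + (z.2.2 - p.2.2) ^ 2 ≤
      ‖z.1 - q.1‖ ^ 2 + (z.2.1 - q.2.1) ^ 2 + (z.2.2 - q.2.2) ^ 2

/-- `p = prox_{γ g}(z)` on `E`. -/
def IsProxE {E : Type*} [NormedAddCommGroup E] (g : E → EReal) (γ : ℝ) (z p : E) : Prop :=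
  ∀ y, g p + ((‖z - p‖ ^ 2 / (2 * γ) : ℝ) : EReal) ≤ g y + ((‖z - y‖ ^ 2 / (2 * γ) : ℝ) : EReal)

/-- `p = prox_{γ g}(z)` on `E ⊕ ℝ` (Hilbert direct sum distance). -/
def IsProx2 {E : Type*} [NormedAddCommGroup E] (g : E × ℝ → EReal) (γ : ℝ)
    (z p : E × ℝ) : Prop :=
  ∀ y, g p + (((‖z.1 - p.1‖ ^ 2 + (z.2 - p.2) ^ 2) / (2 * γ) : ℝ) : EReal) ≤
    g y + (((‖z.1 - y.1‖ ^ 2 + (z.2 - y.2) ^ 2) / (2 * γ) : ℝ) : EReal)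

/-- subdifferential of `f` at `x`. -/
def subdiff {E : Type*} [NormedAddCommGroup E] [InnerProductSpace ℝ E]
    (f : E → EReal) (x : E) : Set E :=
  {u | ∀ y, ((inner ℝ (y - x) u : ℝ) : EReal) + f x ≤ f y}

/-- the exponential cone, union form. -/
def Sset : Set (ℝ × ℝ × ℝ) :=
  {p : ℝ × ℝ × ℝ | 0 < p.2.1 ∧ p.2.1 * Real.exp (p.1 / p.2.1) ≤ p.2.2} ∪
    {p : ℝ × ℝ × ℝ | p.1 ≤ 0 ∧ p.2.1 = 0 ∧ 0 ≤ p.2.2}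

/-- the exponential cone, half-space-intersection form. -/
def Kset : Set (ℝ × ℝ × ℝ) :=
  {p : ℝ × ℝ × ℝ | 0 ≤ p.2.1 ∧ ∀ t : ℝ, Real.exp t * (p.1 + (1 - t) * p.2.1) ≤ p.2.2}

lemma Sset_eq_Kset : Sset = Kset := by
  ext ⟨x, η, δ⟩
  simp only [Sset, Kset, Set.mem_union, Set.mem_setOf_eq]
  constructor
  · rintro (⟨hη, hle⟩ | ⟨hx, hη, hδ⟩)
    · refine ⟨hη.le, fun t => ?_⟩
      have h1 : x / η - t + 1 ≤ Real.exp (x / η - t) := Real.add_one_le_exp _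
      have h2 : Real.exp t * Real.exp (x / η - t) = Real.exp (x / η) := by
        rw [← Real.exp_add]; ring_nf
      have hne : η ≠ 0 := hη.ne'
      calc Real.exp t * (x + (1 - t) * η) = η * Real.exp t * (x / η - t + 1) := by
            field_simp; ring
        _ ≤ η * Real.exp t * Real.exp (x / η - t) :=
            mul_le_mul_of_nonneg_left h1 (by positivity)
        _ = η * Real.exp (x / η) := by rw [mul_assoc, h2]
        _ ≤ δ := hle
    · subst hη
      refine ⟨le_refl 0, fun t => ?_⟩
      have := Real.exp_pos t
      nlinarith
  · rintro ⟨hη0, hall⟩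
    rcases hη0.eq_or_lt with hη | hη
    · right
      subst hη
      have hx : x ≤ 0 := by
        by_contra hx
        push_neg at hx
        have h1 := hall (δ / x)
        have h2 : δ / x + 1 ≤ Real.exp (δ / x) := Real.add_one_le_exp _
        have h3 : δ / x * x = δ := div_mul_cancel₀ δ hx.ne'
        nlinarith [Real.exp_pos (δ / x)]
      refine ⟨hx, rfl, ?_⟩
      by_contra hδ
      push_neg at hδ
      have hx' : x < 0 := by
        have := hall 0
        simp [Real.exp_zero] at this
        linarith
      have hpos : 0 < δ / x := div_pos_of_neg_of_neg hδ hx'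
      have h1 := hall (Real.log (δ / x) - 1)
      have hval : Real.exp (Real.log (δ / x) - 1) = δ / x / Real.exp 1 := by
        rw [Real.exp_sub, Real.exp_log hpos]
      rw [hval] at h1
      have he1 : (2 : ℝ) ≤ Real.exp 1 := by
        have := Real.add_one_le_exp (1 : ℝ); linarith
      have hepos : (0 : ℝ) < Real.exp 1 := Real.exp_pos 1
      have hx0 : x ≠ 0 := hx'.ne
      have he0 : Real.exp 1 ≠ 0 := hepos.ne'
      have h2 : δ / x / Real.exp 1 * (x + (1 - (Real.log (δ / x) - 1)) * 0) =
          δ / Real.exp 1 := by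
        field_simp
        ring
      rw [h2] at h1
      -- δ / e ≤ δ with δ < 0 and e ≥ 2: contradiction
      have : δ < δ / Real.exp 1 := by
        rw [lt_div_iff₀ hepos]
        nlinarith
      linarith
    · left
      refine ⟨hη, ?_⟩
      have h1 := hall (x / η)
      have hx' : x / η * η = x := div_mul_cancel₀ x hη.ne'
      have : x + (1 - x / η) * η = η := by
        have : (1 - x / η) * η = η - x := by rw [sub_mul, one_mul, hx']
        linarith
      rw [this] at h1
      linarith [h1]

lemma epiPersp_exp_eq_Sset :
    epiPersp (fun ξ : ℝ => ((Real.exp ξ : ℝ) : EReal)) 0 = Sset := by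
  ext ⟨x, η, δ⟩
  simp only [epiPersp, persp, Set.mem_setOf_eq, Sset, Set.mem_union]
  rcases lt_trichotomy 0 η with hη | hη | hη
  · rw [if_pos hη]
    simp only [smul_eq_mul]
    rw [show η⁻¹ * x = x / η by rw [inv_mul_eq_div], ← EReal.coe_mul, EReal.coe_le_coe_iff]
    constructor
    · intro h; exact Or.inl ⟨hη, h⟩
    · rintro (⟨_, h⟩ | ⟨_, h0, _⟩)
      · exact h
      · exact absurd h0 hη.ne'
  · subst hη
    rw [if_neg (lt_irrefl (0:ℝ)), if_pos rfl]
    unfold recFn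
    have hco : ∀ t : ℝ,
        (((Real.exp ((0:ℝ) + t • x) : ℝ) : EReal) - ((Real.exp (0:ℝ) : ℝ) : EReal)) *
          ((t⁻¹ : ℝ) : EReal) = (((Real.exp (t * x) - 1) * t⁻¹ : ℝ) : EReal) := by
      intro t
      rw [show (0:ℝ) + t • x = t * x by simp [smul_eq_mul], Real.exp_zero,
        ← EReal.coe_sub, ← EReal.coe_mul]
    have key : (⨆ t ∈ Set.Ioi (0:ℝ),
        (((Real.exp ((0:ℝ) + t • x) : ℝ) : EReal) - ((Real.exp (0:ℝ) : ℝ) : EReal)) *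
          ((t⁻¹ : ℝ) : EReal)) ≤ (δ : EReal) ↔
        ∀ t ∈ Set.Ioi (0:ℝ), (Real.exp (t * x) - 1) * t⁻¹ ≤ δ := by
      simp only [hco]
      rw [iSup₂_le_iff]
      exact forall₂_congr fun t ht => EReal.coe_le_coe_iff
    rw [key]
    constructor
    · intro h
      right
      have hx : x ≤ 0 := by
        by_contra hx
        push_neg at hx
        -- from t = 1 : exp x - 1 ≤ δ and x ≤ exp x - 1, so x ≤ δ
        have hδx : x ≤ δ := by
          have h1 := h 1 (by norm_num)
          have h2 := Real.add_one_le_exp x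
          simp only [one_mul, inv_one, mul_one] at h1
          linarith
        set t0 : ℝ := 4 * (δ - x + 1) / x ^ 2 with ht0def
        have ht0 : 0 < t0 := div_pos (by linarith) (by positivity)
        have hu : 0 ≤ 1 + t0 * x / 2 := by nlinarith
        have hq := Real.add_one_le_exp (t0 * x / 2)
        have hsq : (1 + t0 * x / 2) ^ 2 ≤ Real.exp (t0 * x) := by
          have hmul : Real.exp (t0 * x / 2) * Real.exp (t0 * x / 2) = Real.exp (t0 * x) := by
            rw [← Real.exp_add]; ring_nf
          nlinarith
        have hh := h t0 ht0
        have hid : t0 * (x ^ 2 / 4) = δ - x + 1 := by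
          rw [ht0def]; field_simp; try ring
        have hinv : t0 * t0⁻¹ = 1 := mul_inv_cancel₀ ht0.ne'
        nlinarith [mul_le_mul_of_nonneg_left hh ht0.le]
      refine ⟨hx, rfl, ?_⟩
      by_contra hδ
      push_neg at hδ
      have ht : (0:ℝ) < -2 / δ := div_pos_of_neg_of_neg (by norm_num) hδ
      have h2 := h (-2 / δ) ht
      have hinv : (-2 / δ)⁻¹ = -δ / 2 := by field_simp
      rw [hinv] at h2
      have he := (Real.exp_pos (-2 / δ * x)).le
      nlinarith
    · rintro (⟨h0, _⟩ | ⟨hx, _, hδ⟩)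
      · exact absurd h0 (lt_irrefl 0)
      · intro t ht
        have h1 : Real.exp (t * x) ≤ 1 := by
          rw [Real.exp_le_one_iff]
          exact mul_nonpos_of_nonneg_of_nonpos (le_of_lt ht) hx
        have h2 : (0:ℝ) ≤ t⁻¹ := inv_nonneg.mpr (le_of_lt ht)
        nlinarith
  · rw [if_neg (by linarith), if_neg (by linarith [hη])]
    simp only [top_le_iff]
    constructor
    · intro h; exact absurd h (by simp [EReal.coe_ne_top, eq_comm])
    · rintro (⟨h0, _⟩ | ⟨_, h0, _⟩) <;> linarith [h0, hη]

lemma isClosed_Kset : IsClosed Kset := by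
  have : Kset = {p : ℝ × ℝ × ℝ | 0 ≤ p.2.1} ∩
      ⋂ t : ℝ, {p : ℝ × ℝ × ℝ | Real.exp t * (p.1 + (1 - t) * p.2.1) ≤ p.2.2} := by
    ext p; simp [Kset, Set.mem_iInter]
  rw [this]
  refine IsClosed.inter (isClosed_le continuous_const (by fun_prop)) ?_
  refine isClosed_iInter fun t => isClosed_le (by fun_prop) (by fun_prop)

lemma convex_Kset : Convex ℝ Kset := by
  rintro ⟨x1, η1, δ1⟩ h1 ⟨x2, η2, δ2⟩ h2 a b ha hb hab
  obtain ⟨hη1, hall1⟩ := h1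
  obtain ⟨hη2, hall2⟩ := h2
  constructor
  · simp only [Prod.smul_mk, Prod.mk_add_mk, smul_eq_mul]
    positivity
  · intro t
    simp only [Prod.smul_mk, Prod.mk_add_mk, smul_eq_mul]
    have g1 := mul_le_mul_of_nonneg_left (hall1 t) ha
    have g2 := mul_le_mul_of_nonneg_left (hall2 t) hb
    nlinarith

lemma cone_Kset : Kset = {q : ℝ × ℝ × ℝ | ∃ c : ℝ, 0 ≤ c ∧ ∃ p ∈ Kset, q = c • p} := by
  ext q
  simp only [Set.mem_setOf_eq]
  constructor
  · intro hq; exact ⟨1, zero_le_one, q, hq, (one_smul ℝ q).symm⟩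
  · rintro ⟨c, hc, ⟨x, η, δ⟩, ⟨hη, hall⟩, rfl⟩
    constructor
    · simp only [Prod.smul_mk, smul_eq_mul]
      positivity
    · intro t
      simp only [Prod.smul_mk, smul_eq_mul]
      have := mul_le_mul_of_nonneg_left (hall t) hc
      nlinarith

theorem stmt13 :
    epiPersp (fun ξ : ℝ => ((Real.exp ξ : ℝ) : EReal)) 0 =
      ({p : ℝ × ℝ × ℝ | 0 < p.2.1 ∧ p.2.1 * Real.exp (p.1 / p.2.1) ≤ p.2.2} ∪
        {p : ℝ × ℝ × ℝ | p.1 ≤ 0 ∧ p.2.1 = 0 ∧ 0 ≤ p.2.2}) ∧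
    IsClosed (epiPersp (fun ξ : ℝ => ((Real.exp ξ : ℝ) : EReal)) 0) ∧
    Convex ℝ (epiPersp (fun ξ : ℝ => ((Real.exp ξ : ℝ) : EReal)) 0) ∧
    epiPersp (fun ξ : ℝ => ((Real.exp ξ : ℝ) : EReal)) 0 =
      {q : ℝ × ℝ × ℝ | ∃ c : ℝ, 0 ≤ c ∧
        ∃ p ∈ epiPersp (fun ξ : ℝ => ((Real.exp ξ : ℝ) : EReal)) 0, q = c • p} := by
  have hS : epiPersp (fun ξ : ℝ => ((Real.exp ξ : ℝ) : EReal)) 0 = Sset := epiPersp_exp_eq_Sset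
  have hK : epiPersp (fun ξ : ℝ => ((Real.exp ξ : ℝ) : EReal)) 0 = Kset := by
    rw [hS, Sset_eq_Kset]
  refine ⟨hS, ?_, ?_, ?_⟩
  · rw [hK]; exact isClosed_Kset
  · rw [hK]; exact convex_Kset
  · rw [hK]; exact cone_Kset
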